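/- There exist constants C > 0 and ε₀ ∈ (0, 1) such that the following holds for every ε ∈ (0, ε₀). Let X ⊂ S² be a finite set such that ‖x − x'‖ ≥ ε for all distinct x, x' ∈ X and every point of S² lies within distance ε of X, and let Γ := ⋃_{x ∈ X} C(x, ε^{5/2}). Then μH¹(Γ) ≥ ε^{1/2}/C, and for every partition X = X₁ ⊔ X₂ into two nonempty sets, the corresponding parts Γ_i := ⋃_{x ∈ X_i} C(x, ε^{5/2}) satisfy dist(Γ₁, Γ₂) ≤ C·ε; consequently dist(Γ₁, Γ₂) ≤ C²·ε^{1/2}·μH¹(Γ), so the ratio dist(Γ₁, Γ₂)/μH¹(Γ) tends to 0 with ε (White's criterion fails for every decomposition). -/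

import Mathlib

open MeasureTheory
open scoped Classical

set_option maxHeartbeats 1000000

open Metric Module
open scoped ENNReal NNReal RealInnerProductSpace

local notation "E" => EuclideanSpace ℝ (Fin 3)


lemma circle_lb {x : E} (hx : ‖x‖ = 1) {δ : ℝ} (hδ0 : 0 < δ) (hδ1 : δ ≤ 1) :
    ({y : E | ‖y‖ = 1 ∧ ‖y - x‖ = δ} : Set E).Nonempty ∧
      ENNReal.ofReal δ ≤ μH[1] ({y : E | ‖y‖ = 1 ∧ ‖y - x‖ = δ} : Set E) := by
  haveI : Fact (finrank ℝ (EuclideanSpace ℝ (Fin 3)) = 2 + 1) := ⟨by simp⟩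
  have hx0 : x ≠ 0 := by intro h; rw [h, norm_zero] at hx; norm_num at hx
  have hdim : finrank ℝ ((ℝ ∙ x)ᗮ) = 2 := Submodule.finrank_orthogonal_span_singleton hx0
  let b := (stdOrthonormalBasis ℝ ((ℝ ∙ x)ᗮ)).reindex (finCongr hdim)
  set u : E := ↑(b 0) with hu_def
  set v : E := ↑(b 1) with hv_def
  have hb : Orthonormal ℝ b := b.orthonormal
  have hnu : ‖u‖ = 1 := by exact hb.1 0
  have hnv : ‖v‖ = 1 := by exact hb.1 1
  have huu : ⟪u, u⟫ = 1 := by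
    rw [real_inner_self_eq_norm_sq, hnu]; norm_num
  have hvv : ⟪v, v⟫ = 1 := by
    rw [real_inner_self_eq_norm_sq, hnv]; norm_num
  have huv : ⟪u, v⟫ = 0 := by
    have := hb.2 (i := 0) (j := 1) (by decide)
    exact this
  have hvu : ⟪v, u⟫ = 0 := by rw [real_inner_comm]; exact huv
  have hxu : ⟪x, u⟫ = 0 := by
    have := (b 0).2
    rw [Submodule.mem_orthogonal] at this
    exact this x (Submodule.mem_span_singleton_self x)
  have hux : ⟪u, x⟫ = 0 := by rw [real_inner_comm]; exact hxu
  have hxv : ⟪x, v⟫ = 0 := by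
    have := (b 1).2
    rw [Submodule.mem_orthogonal] at this
    exact this x (Submodule.mem_span_singleton_self x)
  have hvx : ⟪v, x⟫ = 0 := by rw [real_inner_comm]; exact hxv
  have hxx : ⟪x, x⟫ = 1 := by rw [real_inner_self_eq_norm_sq, hx]; norm_num
  have key : ∀ a c d : ℝ, ‖a • x + c • u + d • v‖ ^ 2 = a ^ 2 + c ^ 2 + d ^ 2 := by
    intro a c d
    rw [← real_inner_self_eq_norm_sq]
    simp only [inner_add_left, inner_add_right, real_inner_smul_left, real_inner_smul_right,
      hxx, huu, hvv, hxu, hux, hxv, hvx, huv, hvu]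
    ring
  set r : ℝ := δ * Real.sqrt (1 - δ ^ 2 / 4) with hr_def
  have h14 : (1:ℝ)/4 ≤ 1 - δ ^ 2 / 4 := by nlinarith
  have hsq : Real.sqrt (1 - δ ^ 2 / 4) ^ 2 = 1 - δ ^ 2 / 4 :=
    Real.sq_sqrt (by nlinarith)
  have hhalf : (1:ℝ)/2 ≤ Real.sqrt (1 - δ ^ 2 / 4) := by
    have := Real.sqrt_le_sqrt h14
    calc (1:ℝ)/2 = Real.sqrt (1/4) := by
          rw [show (1:ℝ)/4 = (1/2)^2 by norm_num, Real.sqrt_sq (by norm_num)]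
      _ ≤ _ := this
  have hrδ : δ / 2 ≤ r := by
    rw [hr_def]; nlinarith
  have hr0 : 0 < r := by nlinarith
  have hr2 : r ^ 2 = δ ^ 2 - δ ^ 4 / 4 := by rw [hr_def]; rw [mul_pow, hsq]; ring
  -- the parametrized points
  set y : ℝ → E := fun t => (1 - δ ^ 2 / 2) • x + t • u + Real.sqrt (r ^ 2 - t ^ 2) • v
    with hy_def
  have hymem : ∀ t ∈ Set.Icc (-r) r, ‖y t‖ = 1 ∧ ‖y t - x‖ = δ := by
    intro t ht
    obtain ⟨ht1, ht2⟩ := ht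
    have ht2' : t ^ 2 ≤ r ^ 2 := by nlinarith
    have hs : Real.sqrt (r ^ 2 - t ^ 2) ^ 2 = r ^ 2 - t ^ 2 :=
      Real.sq_sqrt (by nlinarith)
    constructor
    · have h1 : ‖y t‖ ^ 2 = 1 := by
        rw [hy_def]; rw [key]; rw [hs]; rw [hr2]; ring
      nlinarith [norm_nonneg (y t)]
    · have hrw : y t - x = (-(δ ^ 2 / 2)) • x + t • u + Real.sqrt (r ^ 2 - t ^ 2) • v := by
        rw [hy_def]; simp only; module
      have h1 : ‖y t - x‖ ^ 2 = δ ^ 2 := by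
        rw [hrw, key, hs, hr2]; ring
      nlinarith [norm_nonneg (y t - x), hδ0]
  have hyinner : ∀ t : ℝ, ⟪u, y t⟫ = t := by
    intro t
    rw [hy_def]
    simp only [inner_add_right, real_inner_smul_right, hux, huu, huv]
    ring
  constructor
  · exact ⟨y 0, hymem 0 ⟨by linarith, by linarith⟩⟩
  · -- Lipschitz projection
    set f : E → ℝ := fun z => ⟪u, z⟫ with hf_def
    have hlip : LipschitzWith 1 f := by
      apply LipschitzWith.of_dist_le_mul
      intro a c
      rw [hf_def]
      simp only [Real.dist_eq, NNReal.coe_one, one_mul, dist_eq_norm]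
      rw [← inner_sub_right]
      calc |⟪u, a - c⟫| ≤ ‖u‖ * ‖a - c‖ := abs_real_inner_le_norm u (a - c)
        _ = ‖a - c‖ := by rw [hnu, one_mul]
    have himg : Set.Icc (-r) r ⊆ f '' {y : E | ‖y‖ = 1 ∧ ‖y - x‖ = δ} := by
      intro t ht
      exact ⟨y t, hymem t ht, hyinner t⟩
    calc ENNReal.ofReal δ ≤ ENNReal.ofReal (r - (-r)) := by
          apply ENNReal.ofReal_le_ofReal; linarith
      _ = μH[1] (Set.Icc (-r) r) := by
          rw [MeasureTheory.hausdorffMeasure_real, Real.volume_Icc]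
      _ ≤ μH[1] (f '' {y : E | ‖y‖ = 1 ∧ ‖y - x‖ = δ}) := measure_mono himg
      _ ≤ 1 * μH[1] {y : E | ‖y‖ = 1 ∧ ‖y - x‖ = δ} := by
          have := hlip.hausdorffMeasure_image_le (d := 1) zero_le_one
            {y : E | ‖y‖ = 1 ∧ ‖y - x‖ = δ}
          simpa using this
      _ = _ := one_mul _



lemma coord_abs_le (z : E) (i : Fin 3) : |z i| ≤ ‖z‖ := by
  rw [EuclideanSpace.norm_eq]
  rw [show |z i| = Real.sqrt (‖z i‖ ^ 2) by rw [Real.sqrt_sq_eq_abs]; simp]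
  apply Real.sqrt_le_sqrt
  exact Finset.single_le_sum (f := fun j => ‖z j‖ ^ 2) (fun j _ => sq_nonneg _)
    (Finset.mem_univ i)

noncomputable def gpt (a bb : ℝ) : E :=
  (WithLp.equiv 2 (Fin 3 → ℝ)).symm ![a, bb, Real.sqrt (1 - a ^ 2 - bb ^ 2)]

lemma gpt_apply0 (a bb : ℝ) : gpt a bb 0 = a := rfl
lemma gpt_apply1 (a bb : ℝ) : gpt a bb 1 = bb := rfl

lemma gpt_norm {a bb : ℝ} (h : a ^ 2 + bb ^ 2 ≤ 1) : ‖gpt a bb‖ = 1 := by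
  have h1 : ‖gpt a bb‖ ^ 2 = 1 := by
    rw [EuclideanSpace.norm_eq, Real.sq_sqrt]
    · rw [show (Finset.univ : Finset (Fin 3)) = {0, 1, 2} by decide]
      rw [Finset.sum_insert (by decide), Finset.sum_insert (by decide),
        Finset.sum_singleton]
      have : gpt a bb 2 = Real.sqrt (1 - a ^ 2 - bb ^ 2) := rfl
      rw [gpt_apply0, gpt_apply1, this]
      rw [Real.norm_eq_abs, Real.norm_eq_abs, Real.norm_eq_abs, sq_abs, sq_abs, sq_abs,
        Real.sq_sqrt (by linarith)]
      ring
    · positivity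
  nlinarith [norm_nonneg (gpt a bb)]

lemma card_lower {ε : ℝ} (hε : 0 < ε) (hε' : ε < 1/100)
    (X : Finset E)
    (hcov : ∀ p : E, ‖p‖ = 1 → ∃ x ∈ X, ‖p - x‖ ≤ ε) :
    (⌊1/(6*ε)⌋₊ : ℝ) ^ 2 ≤ (X.card : ℝ) := by
  classical
  set n : ℕ := ⌊1/(6*ε)⌋₊ with hn_def
  have hnle : (n : ℝ) ≤ 1/(6*ε) := Nat.floor_le (by positivity)
  -- grid point for index pair
  set g : Fin n × Fin n → E := fun p => gpt (3*ε*p.1) (3*ε*p.2) with hg_def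
  have hcoord : ∀ p : Fin n × Fin n, (3*ε*(p.1:ℝ)) ^ 2 + (3*ε*(p.2:ℝ)) ^ 2 ≤ 1 := by
    intro p
    have h1 : (p.1 : ℝ) ≤ (n : ℝ) - 1 := by
      have := p.1.isLt
      have : (p.1 : ℝ) + 1 ≤ (n : ℝ) := by exact_mod_cast Nat.succ_le_of_lt this
      linarith
    have h2 : (p.2 : ℝ) ≤ (n : ℝ) - 1 := by
      have := p.2.isLt
      have : (p.2 : ℝ) + 1 ≤ (n : ℝ) := by exact_mod_cast Nat.succ_le_of_lt this
      linarith
    have h6 : (n : ℝ) * (6*ε) ≤ 1 := (le_div_iff₀ (by positivity)).mp hnle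
    have hb1 : 3*ε*(p.1:ℝ) ≤ 1/2 := by nlinarith
    have hb2 : 3*ε*(p.2:ℝ) ≤ 1/2 := by nlinarith
    have hp1 : (0:ℝ) ≤ 3*ε*(p.1:ℝ) := by positivity
    have hp2 : (0:ℝ) ≤ 3*ε*(p.2:ℝ) := by positivity
    nlinarith
  have hgnorm : ∀ p, ‖g p‖ = 1 := fun p => gpt_norm (hcoord p)
  have hgsep : ∀ p q : Fin n × Fin n, p ≠ q → 3*ε ≤ ‖g p - g q‖ := by
    intro p q hpq
    have : p.1 ≠ q.1 ∨ p.2 ≠ q.2 := by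
      by_contra h
      push_neg at h
      exact hpq (Prod.ext h.1 h.2)
    rcases this with h | h
    · have h1 : |((g p - g q) : E) 0| ≤ ‖g p - g q‖ := coord_abs_le _ 0
      have h2 : ((g p - g q) : E) 0 = 3*ε*(p.1:ℝ) - 3*ε*(q.1:ℝ) := by
        have : ((g p - g q) : E) 0 = g p 0 - g q 0 := rfl
        rw [this, hg_def]; simp only [gpt_apply0]
      have h3 : (1:ℝ) ≤ |(p.1:ℝ) - (q.1:ℝ)| := by
        have hne : ((p.1 : ℕ) : ℤ) ≠ ((q.1 : ℕ) : ℤ) := by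
          exact_mod_cast fun hh => h (Fin.ext hh)
        have h4 : (1:ℤ) ≤ |((p.1:ℕ):ℤ) - ((q.1:ℕ):ℤ)| := Int.one_le_abs (sub_ne_zero.mpr hne)
        rw [show ((p.1:ℝ)) - ((q.1:ℝ)) = ((((p.1:ℕ):ℤ) - ((q.1:ℕ):ℤ) : ℤ) : ℝ) by push_cast; ring]
        rw [← Int.cast_abs]
        exact_mod_cast h4
      calc 3*ε = 3*ε*1 := by ring
        _ ≤ 3*ε*|(p.1:ℝ) - (q.1:ℝ)| := by nlinarith
        _ = |3*ε*(p.1:ℝ) - 3*ε*(q.1:ℝ)| := by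
              rw [show |3*ε*(p.1:ℝ) - 3*ε*(q.1:ℝ)| = |3*ε*((p.1:ℝ) - (q.1:ℝ))| by congr 1; ring,
                abs_mul, abs_of_nonneg (show (0:ℝ) ≤ 3*ε by positivity)]
        _ = |((g p - g q) : E) 0| := by rw [h2]
        _ ≤ ‖g p - g q‖ := h1
    · have h1 : |((g p - g q) : E) 1| ≤ ‖g p - g q‖ := coord_abs_le _ 1
      have h2 : ((g p - g q) : E) 1 = 3*ε*(p.2:ℝ) - 3*ε*(q.2:ℝ) := by
        have : ((g p - g q) : E) 1 = g p 1 - g q 1 := rfl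
        rw [this, hg_def]; simp only [gpt_apply1]
      have h3 : (1:ℝ) ≤ |(p.2:ℝ) - (q.2:ℝ)| := by
        have hne : ((p.2 : ℕ) : ℤ) ≠ ((q.2 : ℕ) : ℤ) := by
          exact_mod_cast fun hh => h (Fin.ext hh)
        have h4 : (1:ℤ) ≤ |((p.2:ℕ):ℤ) - ((q.2:ℕ):ℤ)| := Int.one_le_abs (sub_ne_zero.mpr hne)
        rw [show ((p.2:ℝ)) - ((q.2:ℝ)) = ((((p.2:ℕ):ℤ) - ((q.2:ℕ):ℤ) : ℤ) : ℝ) by push_cast; ring]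
        rw [← Int.cast_abs]
        exact_mod_cast h4
      calc 3*ε = 3*ε*1 := by ring
        _ ≤ 3*ε*|(p.2:ℝ) - (q.2:ℝ)| := by nlinarith
        _ = |3*ε*(p.2:ℝ) - 3*ε*(q.2:ℝ)| := by
              rw [show |3*ε*(p.2:ℝ) - 3*ε*(q.2:ℝ)| = |3*ε*((p.2:ℝ) - (q.2:ℝ))| by congr 1; ring,
                abs_mul, abs_of_nonneg (show (0:ℝ) ≤ 3*ε by positivity)]
        _ = |((g p - g q) : E) 1| := by rw [h2]
        _ ≤ ‖g p - g q‖ := h1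
  -- choose net point for each grid point
  have hch : ∀ p : Fin n × Fin n, ∃ x ∈ X, ‖g p - x‖ ≤ ε := fun p => hcov (g p) (hgnorm p)
  choose φ hφX hφd using hch
  have hinj : Function.Injective φ := by
    intro p q hpq
    by_contra hne
    have h3 := hgsep p q hne
    have : ‖g p - g q‖ ≤ 2 * ε := by
      calc ‖g p - g q‖ = ‖(g p - φ p) + (φ q - g q)‖ := by rw [hpq]; congr 1; abel
        _ ≤ ‖g p - φ p‖ + ‖φ q - g q‖ := norm_add_le _ _
        _ = ‖g p - φ p‖ + ‖g q - φ q‖ := by rw [norm_sub_rev (φ q)]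
        _ ≤ ε + ε := add_le_add (hφd p) (hφd q)
        _ = 2 * ε := by ring
    linarith
  have hcard : n ^ 2 ≤ X.card := by
    have := Finset.card_le_card_of_injOn (s := (Finset.univ : Finset (Fin n × Fin n)))
      (t := X) φ (fun p _ => hφX p) (hinj.injOn)
    rw [pow_two]; simpa [Fintype.card_prod] using this
  have : ((n:ℝ))^2 = ((n^2 : ℕ) : ℝ) := by push_cast; ring
  rw [this]
  exact_mod_cast hcard



/-- Small circles with increasing centers (an `ε`-net of `S²`, circles of radius
`ε^{5/2}`): the total length is at least `ε^{1/2}/C`, while for every decomposition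
of the contour into two nonempty parts the distance between them is at most `Cε`;
consequently `dist(Γ₁, Γ₂) ≤ C² ε^{1/2} μH¹(Γ)`, so White's criterion fails. -/
theorem stmt_18 :
    ∃ C : ℝ, 0 < C ∧ ∃ ε₀ : ℝ, 0 < ε₀ ∧ ε₀ < 1 ∧
      ∀ ε : ℝ, 0 < ε → ε < ε₀ →
      ∀ X : Finset (EuclideanSpace ℝ (Fin 3)),
        (∀ x ∈ X, ‖x‖ = 1) →
        (∀ x ∈ X, ∀ x' ∈ X, x ≠ x' → ε ≤ ‖x - x'‖) →
        (∀ p : EuclideanSpace ℝ (Fin 3), ‖p‖ = 1 → ∃ x ∈ X, ‖p - x‖ ≤ ε) →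
        (let Γ := ⋃ x ∈ X,
            {y : EuclideanSpace ℝ (Fin 3) | ‖y‖ = 1 ∧ ‖y - x‖ = ε ^ ((5:ℝ)/2)}
         ENNReal.ofReal (ε ^ ((1:ℝ)/2) / C) ≤ μH[1] Γ ∧
         ∀ X₁ X₂ : Finset (EuclideanSpace ℝ (Fin 3)),
           X₁ ∪ X₂ = X → Disjoint X₁ X₂ → X₁.Nonempty → X₂.Nonempty →
           (let Γ₁ := ⋃ x ∈ X₁,
               {y : EuclideanSpace ℝ (Fin 3) | ‖y‖ = 1 ∧ ‖y - x‖ = ε ^ ((5:ℝ)/2)}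
            let Γ₂ := ⋃ x ∈ X₂,
               {y : EuclideanSpace ℝ (Fin 3) | ‖y‖ = 1 ∧ ‖y - x‖ = ε ^ ((5:ℝ)/2)}
            (⨅ p ∈ Γ₁, ⨅ q ∈ Γ₂, edist p q) ≤ ENNReal.ofReal (C * ε) ∧
            (⨅ p ∈ Γ₁, ⨅ q ∈ Γ₂, edist p q)
              ≤ ENNReal.ofReal (C ^ 2 * ε ^ ((1:ℝ)/2)) * μH[1] Γ)) := by
  refine ⟨144, by norm_num, 1/100, by norm_num, by norm_num, ?_⟩
  intro ε hε hε' X hunit hsep hcov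
  intro Γ
  set δ : ℝ := ε ^ ((5:ℝ)/2) with hδ_def
  have hε1 : ε < 1 := by linarith only [hε']
  have hδ0 : 0 < δ := Real.rpow_pos_of_pos hε _
  have hδε : δ ≤ ε := by
    have := Real.rpow_le_rpow_of_exponent_ge hε hε1.le (show (1:ℝ) ≤ 5/2 by norm_num)
    rwa [Real.rpow_one] at this
  have hδ1 : δ ≤ 1 := by linarith only [hδε, hε1]
  have hδsmall : 2 * δ < ε := by
    have h2 : δ ≤ ε ^ (2:ℝ) := Real.rpow_le_rpow_of_exponent_ge hε hε1.le (by norm_num)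
    have h3 : ε ^ (2:ℝ) = ε * ε := by
      rw [show (2:ℝ) = ((2:ℕ):ℝ) by norm_num, Real.rpow_natCast]; ring
    have h4 : ε * ε < ε * (1/100) := mul_lt_mul_of_pos_left hε' hε
    have h5 : δ ≤ ε * ε := h3 ▸ h2
    linarith only [h4, h5, hε]
  set circle : E → Set E := fun x => {y : E | ‖y‖ = 1 ∧ ‖y - x‖ = δ} with hcircle_def
  have hΓdef : Γ = ⋃ x ∈ X, circle x := rfl
  have hmeas : ∀ x : E, MeasurableSet (circle x) := by
    intro x
    have : IsClosed (circle x) := by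
      rw [hcircle_def]
      exact (isClosed_eq continuous_norm continuous_const).inter
        (isClosed_eq ((continuous_id.sub continuous_const).norm) continuous_const)
    exact this.measurableSet
  -- Part 1 : measure lower bound
  have hpart1 : ENNReal.ofReal (ε ^ ((1:ℝ)/2) / 144) ≤ μH[1] Γ := by
    have hdisj : (↑X : Set E).PairwiseDisjoint circle := by
      intro a ha b hb hab
      rw [Function.onFun, Set.disjoint_left]
      intro y hya hyb
      have h1 : ε ≤ ‖a - b‖ := hsep a ha b hb hab
      have h2 : ‖a - b‖ ≤ ‖y - a‖ + ‖y - b‖ := by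
        calc ‖a - b‖ = ‖(y - b) - (y - a)‖ := by congr 1; abel
          _ ≤ ‖y - b‖ + ‖y - a‖ := norm_sub_le _ _
          _ = ‖y - a‖ + ‖y - b‖ := by ring
      have h3 : ‖y - a‖ = δ := hya.2
      have h4 : ‖y - b‖ = δ := hyb.2
      linarith only [h1, h2, h3, h4, hδsmall]
    have hsum : μH[1] Γ = ∑ x ∈ X, μH[1] (circle x) := by
      rw [hΓdef]
      exact measure_biUnion_finset hdisj (fun x _ => hmeas x)
    have hterm : ∀ x ∈ X, ENNReal.ofReal δ ≤ μH[1] (circle x) := by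
      intro x hx
      exact (circle_lb (hunit x hx) hδ0 hδ1).2
    have hge : (X.card : ℝ≥0∞) * ENNReal.ofReal δ ≤ μH[1] Γ := by
      rw [hsum]
      calc (X.card : ℝ≥0∞) * ENNReal.ofReal δ = ∑ _x ∈ X, ENNReal.ofReal δ := by
            rw [Finset.sum_const, nsmul_eq_mul]
        _ ≤ ∑ x ∈ X, μH[1] (circle x) := Finset.sum_le_sum hterm
    refine le_trans ?_ hge
    have hcast : ((X.card : ℕ) : ℝ≥0∞) = ENNReal.ofReal ((X.card : ℝ)) := by
      rw [ENNReal.ofReal_natCast]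
    rw [hcast, ← ENNReal.ofReal_mul (by positivity)]
    apply ENNReal.ofReal_le_ofReal
    -- real inequality
    have hX := card_lower hε hε' X hcov
    set N : ℝ := (⌊1/(6*ε)⌋₊ : ℝ) with hN_def
    have hN : 1/(12*ε) ≤ N := by
      have h1 : 1/(6*ε) - 1 < N := Nat.sub_one_lt_floor _
      have h2 : (1:ℝ) ≤ 1/(12*ε) := by
        rw [le_div_iff₀ (by positivity)]; linarith only [hε']
      have : 1/(12*ε) + 1/(12*ε) = 1/(6*ε) := by field_simp; ring
      linarith only [h1, h2, this]
    have hNε : 1 ≤ 12 * ε * N := by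
      rw [div_le_iff₀ (by positivity)] at hN
      linarith only [hN]
    have hkey : δ = ε ^ ((1:ℝ)/2) * ε ^ 2 := by
      rw [hδ_def, show (ε:ℝ) ^ 2 = ε ^ ((2:ℕ):ℝ) by rw [Real.rpow_natCast],
        ← Real.rpow_add hε]
      norm_num
    have hroot : 0 < ε ^ ((1:ℝ)/2) := Real.rpow_pos_of_pos hε _
    have hcard' : N ^ 2 ≤ (X.card : ℝ) := hX
    rw [hkey]
    have hNpos : 0 < N := by
      have : (0:ℝ) < 1/(12*ε) := by positivity
      linarith only [hN, this]
    have h144 : 1 ≤ 144 * ε^2 * N^2 := by nlinarith only [hNε, hε, hNpos]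
    have hδpos2 : 0 ≤ ε ^ ((1:ℝ)/2) * ε^2 := by positivity
    calc ε ^ ((1:ℝ)/2) / 144 ≤ N^2 * (ε ^ ((1:ℝ)/2) * ε^2) := by
          rw [div_le_iff₀ (by norm_num)]
          nlinarith only [h144, hroot, hNpos, hε]
      _ ≤ (X.card : ℝ) * (ε ^ ((1:ℝ)/2) * ε^2) := by
          apply mul_le_mul_of_nonneg_right hcard' hδpos2
  refine ⟨hpart1, ?_⟩
  -- Part 2
  intro X₁ X₂ hunion hdisjX hne₁ hne₂
  intro Γ₁ Γ₂
  have hΓ₁def : Γ₁ = ⋃ x ∈ X₁, circle x := rfl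
  have hΓ₂def : Γ₂ = ⋃ x ∈ X₂, circle x := rfl
  -- find nearby points x₁' ∈ X₁, x₂' ∈ X₂
  obtain ⟨a₁, ha₁⟩ := hne₁
  obtain ⟨a₂, ha₂⟩ := hne₂
  have ha₁X : a₁ ∈ X := by rw [← hunion]; exact Finset.mem_union_left _ ha₁
  have ha₂X : a₂ ∈ X := by rw [← hunion]; exact Finset.mem_union_right _ ha₂
  have hrank : 1 < Module.rank ℝ (EuclideanSpace ℝ (Fin 3)) := by
    rw [← finrank_eq_rank]
    have : finrank ℝ (EuclideanSpace ℝ (Fin 3)) = 3 := by simp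
    rw [this]
    exact_mod_cast (by norm_num : (1:ℕ) < 3)
  have hsphere : IsPreconnected (Metric.sphere (0:E) 1) :=
    (isConnected_sphere hrank 0 zero_le_one).isPreconnected
  have hmemsph : ∀ z : E, ‖z‖ = 1 → z ∈ Metric.sphere (0:E) 1 := by
    intro z hz; rwa [mem_sphere_zero_iff_norm]
  have hIVT := hsphere.intermediate_value₂
    (hmemsph a₁ (hunit a₁ ha₁X)) (hmemsph a₂ (hunit a₂ ha₂X))
    ((continuous_infDist_pt (↑X₁ : Set E)).continuousOn)
    ((continuous_infDist_pt (↑X₂ : Set E)).continuousOn)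
    (by rw [infDist_zero_of_mem (by exact_mod_cast ha₁)]; exact infDist_nonneg)
    (by rw [infDist_zero_of_mem (by exact_mod_cast ha₂)]; exact infDist_nonneg)
  obtain ⟨p, hpsph, hpeq⟩ := hIVT
  have hpnorm : ‖p‖ = 1 := by rwa [mem_sphere_zero_iff_norm] at hpsph
  obtain ⟨x, hxX, hxd⟩ := hcov p hpnorm
  have hmin : infDist p (↑X₁ : Set E) ≤ ε ∧ infDist p (↑X₂ : Set E) ≤ ε := by
    have hx12 : x ∈ X₁ ∪ X₂ := by rw [hunion]; exact hxX
    rcases Finset.mem_union.mp hx12 with h | h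
    · have h1 : infDist p (↑X₁ : Set E) ≤ ε := by
        refine le_trans (infDist_le_dist_of_mem (by exact_mod_cast h)) ?_
        rw [dist_eq_norm]; exact hxd
      exact ⟨h1, hpeq ▸ h1⟩
    · have h2 : infDist p (↑X₂ : Set E) ≤ ε := by
        refine le_trans (infDist_le_dist_of_mem (by exact_mod_cast h)) ?_
        rw [dist_eq_norm]; exact hxd
      exact ⟨hpeq ▸ h2, h2⟩
  obtain ⟨x₁', hx₁'mem, hx₁'d⟩ := (infDist_lt_iff
    (⟨a₁, by exact_mod_cast ha₁⟩ : (↑X₁ : Set E).Nonempty)).mp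
    (lt_of_le_of_lt hmin.1 (by linarith only [hε] : ε < 2*ε))
  obtain ⟨x₂', hx₂'mem, hx₂'d⟩ := (infDist_lt_iff
    (⟨a₂, by exact_mod_cast ha₂⟩ : (↑X₂ : Set E).Nonempty)).mp
    (lt_of_le_of_lt hmin.2 (by linarith only [hε] : ε < 2*ε))
  have hx₁'X₁ : x₁' ∈ X₁ := by exact_mod_cast hx₁'mem
  have hx₂'X₂ : x₂' ∈ X₂ := by exact_mod_cast hx₂'mem
  have hx₁'X : x₁' ∈ X := by rw [← hunion]; exact Finset.mem_union_left _ hx₁'X₁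
  have hx₂'X : x₂' ∈ X := by rw [← hunion]; exact Finset.mem_union_right _ hx₂'X₂
  obtain ⟨p₁, hp₁⟩ := (circle_lb (hunit x₁' hx₁'X) hδ0 hδ1).1
  obtain ⟨p₂, hp₂⟩ := (circle_lb (hunit x₂' hx₂'X) hδ0 hδ1).1
  have hp₁Γ : p₁ ∈ Γ₁ := by
    rw [hΓ₁def]; exact Set.mem_iUnion₂.mpr ⟨x₁', hx₁'X₁, hp₁⟩
  have hp₂Γ : p₂ ∈ Γ₂ := by
    rw [hΓ₂def]; exact Set.mem_iUnion₂.mpr ⟨x₂', hx₂'X₂, hp₂⟩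
  have hd12 : dist p₁ p₂ ≤ 144 * ε := by
    have h1 : dist p₁ x₁' = δ := by rw [dist_eq_norm]; exact hp₁.2
    have h2 : dist p₂ x₂' = δ := by rw [dist_eq_norm]; exact hp₂.2
    have h3 : dist p x₁' < 2*ε := hx₁'d
    have h4 : dist p x₂' < 2*ε := hx₂'d
    calc dist p₁ p₂ ≤ dist p₁ x₁' + dist x₁' p₂ := dist_triangle _ _ _
      _ ≤ dist p₁ x₁' + (dist x₁' p + dist p p₂) := by
          have := dist_triangle x₁' p p₂; linarith only [this]
      _ ≤ dist p₁ x₁' + (dist x₁' p + (dist p x₂' + dist x₂' p₂)) := by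
          have := dist_triangle p x₂' p₂; linarith only [this]
      _ = δ + (dist p x₁' + (dist p x₂' + δ)) := by
          rw [h1, dist_comm x₂' p₂, h2, dist_comm x₁' p]
      _ ≤ 144 * ε := by linarith only [h3, h4, hδε, hε]
  have hinf : (⨅ p ∈ Γ₁, ⨅ q ∈ Γ₂, edist p q) ≤ ENNReal.ofReal (144 * ε) := by
    calc (⨅ p ∈ Γ₁, ⨅ q ∈ Γ₂, edist p q) ≤ ⨅ q ∈ Γ₂, edist p₁ q := iInf₂_le p₁ hp₁Γ
      _ ≤ edist p₁ p₂ := iInf₂_le p₂ hp₂Γ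
      _ = ENNReal.ofReal (dist p₁ p₂) := edist_dist _ _
      _ ≤ ENNReal.ofReal (144 * ε) := ENNReal.ofReal_le_ofReal hd12
  refine ⟨hinf, ?_⟩
  have hfact : (144:ℝ) * ε = (144:ℝ)^2 * ε ^ ((1:ℝ)/2) * (ε ^ ((1:ℝ)/2) / 144) := by
    have : ε ^ ((1:ℝ)/2) * ε ^ ((1:ℝ)/2) = ε := by
      rw [← Real.rpow_add hε]; norm_num
    field_simp
    nlinarith only [this, hε]
  calc (⨅ p ∈ Γ₁, ⨅ q ∈ Γ₂, edist p q) ≤ ENNReal.ofReal (144 * ε) := hinf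
    _ = ENNReal.ofReal ((144:ℝ)^2 * ε ^ ((1:ℝ)/2)) * ENNReal.ofReal (ε ^ ((1:ℝ)/2) / 144) := by
        rw [← ENNReal.ofReal_mul (by positivity), ← hfact]
    _ ≤ ENNReal.ofReal ((144:ℝ)^2 * ε ^ ((1:ℝ)/2)) * μH[1] Γ := by
        exact mul_le_mul_right hpart1 _
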